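/- Let B, R > 0, Θ₀ ∈ (0,1), ε > 0, and let L satisfy L > 6R and L > 4R/ε². For h > 0 and η > 0 define the error term 𝓔_{ε,L}(h,η) = exp(−2S_h(L)/h) + exp(−2d(L−R−4η)/h) + exp(−S_h(L(1+ε))/h) + exp(−(d(L−R−4η) + d(εL+R+2η))/h). Then there exists η₀ > 0 such that for every η ∈ (0, η₀) there exist κ > 0, C > 0 and h₀ > 0 with 𝓔_{ε,L}(h,η) ≤ C·exp(−(1+κ)·S_h(L)/h) for all h ∈ (0, h₀). -/

import Mathlib

/-- The Agmon distance function `d` of the paper, with parameters `B`, `R`. -/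
noncomputable def agmonDist (B R r : ℝ) : ℝ :=
  B / 4 * (r ^ 2 - R ^ 2) - B * R ^ 2 / 2 * Real.log (r / R)

/-- The `h`-dependent tunneling action `S_h` of the paper, with parameters `B`, `R`, `Θ₀`. -/
noncomputable def Sh (B R Θ₀ h ℓ : ℝ) : ℝ :=
  B * ℓ / 4 * Real.sqrt (ℓ ^ 2 - 4 * R ^ 2)
    - (B * R ^ 2 + 2 * Real.sqrt (h * Θ₀ * B * R ^ 2))
      * Real.log ((ℓ + Real.sqrt (ℓ ^ 2 - 4 * R ^ 2)) / (2 * R))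

/-- The `h`-independent action `S_0`. -/
noncomputable def S0 (B R ℓ : ℝ) : ℝ :=
  B * ℓ / 4 * Real.sqrt (ℓ ^ 2 - 4 * R ^ 2)
    - B * R ^ 2 * Real.log ((ℓ + Real.sqrt (ℓ ^ 2 - 4 * R ^ 2)) / (2 * R))

lemma Sh_eq_S0 (B R Θ₀ h ℓ : ℝ) :
    Sh B R Θ₀ h ℓ = S0 B R ℓ
      - 2 * Real.sqrt (h * Θ₀ * B * R ^ 2)
        * Real.log ((ℓ + Real.sqrt (ℓ ^ 2 - 4 * R ^ 2)) / (2 * R)) := by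
  unfold Sh S0; ring

lemma log_div_le {x y : ℝ} (hx : 0 < x) (hy : 0 < y) : Real.log (x / y) ≤ (x - y) / y := by
  have h := Real.log_le_sub_one_of_pos (div_pos hx hy)
  have : x / y - 1 = (x - y) / y := by field_simp
  linarith

lemma log_sub_log {a b : ℝ} (ha : 0 < a) (hb : 0 < b) (R : ℝ) (hR : 0 < R) :
    Real.log (b / R) - Real.log (a / R) = Real.log (b / a) := by
  rw [Real.log_div hb.ne' hR.ne', Real.log_div ha.ne' hR.ne', Real.log_div hb.ne' ha.ne']
  ring

lemma agmon_sub (B R a b : ℝ) : agmonDist B R b - agmonDist B R a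
    = B / 4 * (b ^ 2 - a ^ 2) - B * R ^ 2 / 2 * (Real.log (b / R) - Real.log (a / R)) := by
  unfold agmonDist; ring

lemma agmon_mono {B R a b : ℝ} (hB : 0 ≤ B) (hR : 0 < R) (ha : R ≤ a) (hab : a ≤ b) :
    agmonDist B R a ≤ agmonDist B R b := by
  have ha0 : 0 < a := lt_of_lt_of_le hR ha
  have hb0 : 0 < b := lt_of_lt_of_le ha0 hab
  rw [← sub_nonneg, agmon_sub, log_sub_log ha0 hb0 R hR]
  have h2 : Real.log (b / a) ≤ (b - a) / a := log_div_le hb0 ha0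
  have h3 : (b - a) / a ≤ (b - a) * (a + b) / (2 * R ^ 2) := by
    rw [div_le_div_iff₀ ha0 (by positivity)]
    have key : 0 ≤ (b - a) * ((a + b) * a - 2 * R ^ 2) :=
      mul_nonneg (by linarith) (by nlinarith)
    nlinarith [key]
  have h5 : B * R ^ 2 / 2 * Real.log (b / a)
      ≤ B * R ^ 2 / 2 * ((b - a) * (a + b) / (2 * R ^ 2)) :=
    mul_le_mul_of_nonneg_left (h2.trans h3) (by positivity)
  have h6 : B * R ^ 2 / 2 * ((b - a) * (a + b) / (2 * R ^ 2)) = B / 4 * (b ^ 2 - a ^ 2) := by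
    field_simp; ring
  linarith [h6 ▸ h5]

lemma agmon_diff_le {B R a b : ℝ} (hB : 0 ≤ B) (hR : 0 < R) (ha : 0 < a) (hab : a ≤ b) :
    agmonDist B R b - agmonDist B R a ≤ B / 4 * (b ^ 2 - a ^ 2) := by
  have hb0 : 0 < b := lt_of_lt_of_le ha hab
  rw [agmon_sub, log_sub_log ha hb0 R hR]
  have h2 : 0 ≤ Real.log (b / a) := Real.log_nonneg (by rw [le_div_iff₀ ha]; linarith)
  have h5 : 0 ≤ B * R ^ 2 / 2 * Real.log (b / a) :=
    mul_nonneg (by positivity) h2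
  linarith

lemma u_sq {R ℓ : ℝ} (hR : 0 < R) (hℓ : 2 * R ≤ ℓ) :
    (Real.sqrt (ℓ ^ 2 - 4 * R ^ 2)) ^ 2 = ℓ ^ 2 - 4 * R ^ 2 :=
  Real.sq_sqrt (by nlinarith)

lemma u_le {R ℓ : ℝ} (hR : 0 < R) (hℓ : 2 * R ≤ ℓ) :
    Real.sqrt (ℓ ^ 2 - 4 * R ^ 2) ≤ ℓ := by
  have h1 := u_sq hR hℓ
  have h2 := Real.sqrt_nonneg (ℓ ^ 2 - 4 * R ^ 2)
  nlinarith [sq_nonneg R]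

lemma S0_upper {B R L : ℝ} (hB : 0 < B) (hR : 0 < R) (hL : 6 * R < L) :
    S0 B R L ≤ B * L ^ 2 / 4 - B * R ^ 2 * Real.log (L / (2 * R)) := by
  unfold S0
  have hL0 : 0 < L := by linarith
  have h2R : 2 * R ≤ L := by linarith
  have hul := u_le hR h2R
  have hun := Real.sqrt_nonneg (L ^ 2 - 4 * R ^ 2)
  have hlog : Real.log (L / (2 * R)) ≤ Real.log ((L + Real.sqrt (L ^ 2 - 4 * R ^ 2)) / (2 * R)) := by
    apply Real.log_le_log (div_pos hL0 (by linarith))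
    apply div_le_div_of_nonneg_right ?_ (by positivity)
    linarith
  have h1 : B * L / 4 * Real.sqrt (L ^ 2 - 4 * R ^ 2) ≤ B * L / 4 * L :=
    mul_le_mul_of_nonneg_left hul (by positivity)
  nlinarith [mul_le_mul_of_nonneg_left hlog (show (0:ℝ) ≤ B * R ^ 2 by positivity)]

lemma S0_lower {B R L : ℝ} (hB : 0 < B) (hR : 0 < R) (hL : 6 * R < L) :
    B * L ^ 2 / 20 ≤ S0 B R L := by
  unfold S0
  have hL0 : 0 < L := by linarith
  have h2R : 2 * R ≤ L := by linarith
  have hul := u_le hR h2R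
  have hun := Real.sqrt_nonneg (L ^ 2 - 4 * R ^ 2)
  have hulow : 9 / 10 * L ≤ Real.sqrt (L ^ 2 - 4 * R ^ 2) := by
    rw [show (9:ℝ)/10*L = Real.sqrt ((9/10*L)^2) from (Real.sqrt_sq (by positivity)).symm]
    apply Real.sqrt_le_sqrt
    nlinarith
  set t := (L + Real.sqrt (L ^ 2 - 4 * R ^ 2)) / (2 * R) with ht
  have htpos : 0 < t := by positivity
  have hlogt : Real.log t ≤ L / R := by
    have h1 : Real.log t ≤ t - 1 := Real.log_le_sub_one_of_pos htpos
    have h2 : t ≤ L / R := by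
      rw [ht, div_le_div_iff₀ (by positivity) hR]
      nlinarith
    linarith
  have h3 : B * R ^ 2 * Real.log t ≤ B * R ^ 2 * (L / R) :=
    mul_le_mul_of_nonneg_left hlogt (by positivity)
  have h4 : B * R ^ 2 * (L / R) = B * R * L := by field_simp
  have h5 : B * L / 4 * (9 / 10 * L) ≤ B * L / 4 * Real.sqrt (L ^ 2 - 4 * R ^ 2) :=
    mul_le_mul_of_nonneg_left hulow (by positivity)
  nlinarith [h4 ▸ h3, h5,
    mul_nonneg (mul_nonneg hB.le hL0.le) (show (0:ℝ) ≤ L - 6*R by linarith)]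

lemma g_gap {t₁ t₂ s₁ s₂ : ℝ} (h3 : 3 ≤ t₁) (h12 : t₁ ≤ t₂)
    (hs1 : t₁ * s₁ = 1) (hs2 : t₂ * s₂ = 1) :
    (t₂ ^ 2 - t₁ ^ 2) * (7 / 36)
      ≤ ((t₂ ^ 2 - s₂ ^ 2) / 4 - Real.log t₂) - ((t₁ ^ 2 - s₁ ^ 2) / 4 - Real.log t₁) := by
  have ht1 : (0:ℝ) < t₁ := by linarith
  have ht2 : (0:ℝ) < t₂ := by linarith
  have hs1p : 0 < s₁ := by nlinarith
  have hs2p : 0 < s₂ := by nlinarith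
  have hs21 : s₂ ≤ s₁ := by nlinarith
  have hssq : s₂ ^ 2 ≤ s₁ ^ 2 := by nlinarith
  have hlogle : Real.log t₂ - Real.log t₁ ≤ (t₂ ^ 2 - t₁ ^ 2) / (2 * t₁ ^ 2) := by
    have hA := Real.log_le_sub_one_of_pos (show (0:ℝ) < t₂ ^ 2 / t₁ ^ 2 by positivity)
    have hB' : Real.log (t₂ ^ 2 / t₁ ^ 2) = 2 * (Real.log t₂ - Real.log t₁) := by
      rw [Real.log_div (by positivity) (by positivity), Real.log_pow, Real.log_pow]
      push_cast; ring
    have hC : t₂ ^ 2 / t₁ ^ 2 - 1 = (t₂ ^ 2 - t₁ ^ 2) / t₁ ^ 2 := by field_simp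
    have hD : (t₂ ^ 2 - t₁ ^ 2) / t₁ ^ 2 = 2 * ((t₂ ^ 2 - t₁ ^ 2) / (2 * t₁ ^ 2)) := by
      ring
    rw [hB', hC, hD] at hA
    linarith
  have hdiv18 : (t₂ ^ 2 - t₁ ^ 2) / (2 * t₁ ^ 2) ≤ (t₂ ^ 2 - t₁ ^ 2) / 18 := by
    have hA : 0 ≤ t₂ ^ 2 - t₁ ^ 2 := by nlinarith
    have hBB : (0:ℝ) ≤ 2 * t₁ ^ 2 - 18 := by nlinarith
    rw [div_le_div_iff₀ (by positivity) (by norm_num)]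
    nlinarith [mul_nonneg hA hBB]
  have h14 : (t₂ ^ 2 - t₁ ^ 2) * (7/36) = (t₂ ^ 2 - t₁ ^ 2) / 4 - (t₂ ^ 2 - t₁ ^ 2) / 18 := by
    ring
  linarith

set_option maxHeartbeats 1000000 in
lemma S0_gap_core {B R ℓ₁ ℓ₂ u₁ u₂ : ℝ} (hB : 0 < B) (hR : 0 < R)
    (h1 : 6 * R < ℓ₁) (h12 : ℓ₁ ≤ ℓ₂)
    (hu1n : 0 ≤ u₁) (hu2n : 0 ≤ u₂)
    (hu1 : u₁ ^ 2 = ℓ₁ ^ 2 - 4 * R ^ 2) (hu2 : u₂ ^ 2 = ℓ₂ ^ 2 - 4 * R ^ 2) :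
    B * ℓ₁ / 4 * u₁ - B * R ^ 2 * Real.log ((ℓ₁ + u₁) / (2 * R))
      + 7 / 72 * B * (ℓ₂ - ℓ₁) * ℓ₁
      ≤ B * ℓ₂ / 4 * u₂ - B * R ^ 2 * Real.log ((ℓ₂ + u₂) / (2 * R)) := by
  have hu12 : u₁ ≤ u₂ := by
    nlinarith [mul_nonneg (sub_nonneg.2 h12) (show (0:ℝ) ≤ ℓ₁ + ℓ₂ by linarith),
      mul_nonneg hu1n hu2n]
  have ht12 : (ℓ₁ + u₁) / (2 * R) ≤ (ℓ₂ + u₂) / (2 * R) :=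
    div_le_div_of_nonneg_right (by linarith) (by linarith)
  have ht3 : 3 ≤ (ℓ₁ + u₁) / (2 * R) := by
    rw [le_div_iff₀ (by linarith)]; linarith
  have hs1 : (ℓ₁ + u₁) / (2 * R) * ((ℓ₁ - u₁) / (2 * R)) = 1 := by
    field_simp
    linear_combination -hu1
  have hs2 : (ℓ₂ + u₂) / (2 * R) * ((ℓ₂ - u₂) / (2 * R)) = 1 := by
    field_simp
    linear_combination -hu2
  have hg := g_gap ht3 ht12 hs1 hs2
  have hq1 : (((ℓ₁ + u₁) / (2 * R)) ^ 2 - ((ℓ₁ - u₁) / (2 * R)) ^ 2) / 4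
      = ℓ₁ * u₁ / (4 * R ^ 2) := by
    field_simp; ring
  have hq2 : (((ℓ₂ + u₂) / (2 * R)) ^ 2 - ((ℓ₂ - u₂) / (2 * R)) ^ 2) / 4
      = ℓ₂ * u₂ / (4 * R ^ 2) := by
    field_simp; ring
  have htsq : (ℓ₂ - ℓ₁) * ℓ₁ / (2 * R ^ 2)
      ≤ ((ℓ₂ + u₂) / (2 * R)) ^ 2 - ((ℓ₁ + u₁) / (2 * R)) ^ 2 := by
    have hraw : 2 * (ℓ₂ - ℓ₁) * ℓ₁ ≤ (ℓ₂ + u₂) ^ 2 - (ℓ₁ + u₁) ^ 2 := by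
      nlinarith [mul_le_mul h12 hu12 hu1n (show (0:ℝ) ≤ ℓ₂ by linarith),
        sq_nonneg (ℓ₂ - ℓ₁),
        mul_nonneg (sub_nonneg.2 h12) (show (0:ℝ) ≤ ℓ₁ + ℓ₂ by linarith)]
    rw [div_pow, div_pow, div_sub_div_same, div_le_div_iff₀ (by positivity) (by positivity)]
    nlinarith [mul_le_mul_of_nonneg_right hraw (sq_nonneg R)]
  rw [hq1, hq2] at hg
  have hmul := mul_le_mul_of_nonneg_left hg (show (0:ℝ) ≤ B * R ^ 2 by positivity)
  have hmul2 := mul_le_mul_of_nonneg_left htsq (show (0:ℝ) ≤ 7 / 36 * (B * R ^ 2) by positivity)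
  have e3 : 7 / 36 * (B * R ^ 2) * (((ℓ₂ + u₂) / (2 * R)) ^ 2 - ((ℓ₁ + u₁) / (2 * R)) ^ 2)
      = B * R ^ 2 * ((((ℓ₂ + u₂) / (2 * R)) ^ 2 - ((ℓ₁ + u₁) / (2 * R)) ^ 2) * (7 / 36)) := by
    ring
  have e1 : B * R ^ 2 * (ℓ₂ * u₂ / (4 * R ^ 2) - Real.log ((ℓ₂ + u₂) / (2 * R))
      - (ℓ₁ * u₁ / (4 * R ^ 2) - Real.log ((ℓ₁ + u₁) / (2 * R))))
      = (B * ℓ₂ / 4 * u₂ - B * R ^ 2 * Real.log ((ℓ₂ + u₂) / (2 * R)))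
        - (B * ℓ₁ / 4 * u₁ - B * R ^ 2 * Real.log ((ℓ₁ + u₁) / (2 * R))) := by
    field_simp
  have e2 : 7 / 36 * (B * R ^ 2) * ((ℓ₂ - ℓ₁) * ℓ₁ / (2 * R ^ 2))
      = 7 / 72 * B * (ℓ₂ - ℓ₁) * ℓ₁ := by
    field_simp; ring
  linarith [hmul, hmul2, e1, e2, e3]

lemma S0_gap {B R ℓ₁ ℓ₂ : ℝ} (hB : 0 < B) (hR : 0 < R) (h1 : 6 * R < ℓ₁) (h12 : ℓ₁ ≤ ℓ₂) :
    S0 B R ℓ₁ + 7 / 72 * B * (ℓ₂ - ℓ₁) * ℓ₁ ≤ S0 B R ℓ₂ := by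
  have := S0_gap_core hB hR h1 h12 (Real.sqrt_nonneg (ℓ₁ ^ 2 - 4 * R ^ 2))
    (Real.sqrt_nonneg (ℓ₂ ^ 2 - 4 * R ^ 2)) (u_sq hR (by linarith)) (u_sq hR (by linarith))
  unfold S0
  linarith

lemma two_d_ge {B R L : ℝ} (hB : 0 < B) (hR : 0 < R) (hL : 6 * R < L) :
    S0 B R L + B * L ^ 2 / 18 ≤ 2 * agmonDist B R (L - R) := by
  have hL0 : 0 < L := by linarith
  have hLR : 0 < L - R := by linarith
  have hup := S0_upper hB hR hL
  have hsplit : Real.log ((L - R) / R) = Real.log (2 * (L - R) / L) + Real.log (L / (2 * R)) := by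
    rw [show (L - R) / R = (2 * (L - R) / L) * (L / (2 * R)) by field_simp,
      Real.log_mul (by positivity) (by positivity)]
  have hlb : Real.log (2 * (L - R) / L) ≤ 1 := by
    have h1 := Real.log_le_sub_one_of_pos (show (0:ℝ) < 2 * (L - R) / L by positivity)
    have h2 : 2 * (L - R) / L ≤ 2 := by rw [div_le_iff₀ hL0]; linarith
    linarith
  unfold agmonDist
  rw [hsplit]
  nlinarith [hup, mul_le_mul_of_nonneg_left hlb (show (0:ℝ) ≤ B * R ^ 2 by positivity),
    mul_nonneg hB.le (mul_nonneg (show (0:ℝ) ≤ L - 6 * R by linarith)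
      (show (0:ℝ) ≤ 7 * L + 6 * R by linarith))]

lemma d_sum_ge {B R L ε : ℝ} (hB : 0 < B) (hR : 0 < R) (hL : 6 * R < L)
    (hε : 0 < ε) (hεL : 4 * R < ε ^ 2 * L) :
    S0 B R L + B * R * L / 2 ≤ agmonDist B R (L - R) + agmonDist B R (ε * L + R) := by
  have hL0 : 0 < L := by linarith
  have hLR : 0 < L - R := by linarith
  have hup := S0_upper hB hR hL
  have h2log : Real.log ((L - R) / R) ≤ 2 * Real.log (L / (2 * R)) := by
    have h1 : Real.log ((L - R) / R) ≤ Real.log ((L / (2 * R)) ^ 2) := by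
      apply Real.log_le_log (by positivity)
      rw [div_pow, div_le_div_iff₀ hR (by positivity)]
      nlinarith [sq_nonneg (L - 2 * R)]
    rw [Real.log_pow] at h1
    push_cast at h1
    linarith
  have hd2 : B * R * L ≤ agmonDist B R (ε * L + R) := by
    unfold agmonDist
    have hlog : Real.log ((ε * L + R) / R) ≤ ε * L / R := by
      have h := log_div_le (show (0:ℝ) < ε * L + R by positivity) hR
      have e : (ε * L + R - R) / R = ε * L / R := by ring_nf
      linarith [e ▸ h]
    have e2 : B * R ^ 2 / 2 * (ε * L / R) = B * ε * L * R / 2 := by field_simp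
    nlinarith [mul_le_mul_of_nonneg_left hlog (show (0:ℝ) ≤ B * R ^ 2 / 2 by positivity),
      e2, mul_le_mul_of_nonneg_right hεL.le hL0.le,
      mul_nonneg (mul_nonneg hB.le hε.le) (mul_nonneg hL0.le hR.le)]
  have hdLR : B / 4 * (L ^ 2 - 2 * L * R) - B * R ^ 2 * Real.log (L / (2 * R))
      ≤ agmonDist B R (L - R) := by
    unfold agmonDist
    nlinarith [mul_le_mul_of_nonneg_left h2log (show (0:ℝ) ≤ B * R ^ 2 / 2 by positivity)]
  nlinarith [hup, hd2, hdLR, mul_nonneg (mul_nonneg hB.le hR.le) hL0.le]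

set_option maxHeartbeats 1000000 in
/-- if `L > 6R` and `L > 4R/ε²`, then there is `η₀ > 0` such that for every
`η ∈ (0, η₀)` there are `κ, C, h₀ > 0` with
`𝓔_{ε,L}(h,η) ≤ C·exp(−(1+κ)S_h(L)/h)` for all `h ∈ (0, h₀)`, where
`𝓔_{ε,L}(h,η) = e^{−2S_h(L)/h} + e^{−2d(L−R−4η)/h} + e^{−S_h(L(1+ε))/h}
  + e^{−(d(L−R−4η)+d(εL+R+2η))/h}`. -/
theorem error_terms_small (B R Θ₀ ε L : ℝ) (hB : 0 < B) (hR : 0 < R)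
    (hΘ : Θ₀ ∈ Set.Ioo (0 : ℝ) 1) (hε : 0 < ε) (hL : 6 * R < L) (hL' : 4 * R / ε ^ 2 < L) :
    ∃ η₀ > 0, ∀ η ∈ Set.Ioo (0 : ℝ) η₀, ∃ κ > 0, ∃ C > 0, ∃ h₀ > 0,
      ∀ h ∈ Set.Ioo (0 : ℝ) h₀,
        Real.exp (-(2 * Sh B R Θ₀ h L) / h)
          + Real.exp (-(2 * agmonDist B R (L - R - 4 * η)) / h)
          + Real.exp (-(Sh B R Θ₀ h (L * (1 + ε))) / h)
          + Real.exp (-(agmonDist B R (L - R - 4 * η) + agmonDist B R (ε * L + R + 2 * η)) / h)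
        ≤ C * Real.exp (-((1 + κ) * Sh B R Θ₀ h L) / h) := by
  obtain ⟨hΘ0, hΘ1⟩ := hΘ
  have hL0 : 0 < L := by linarith
  have hεL : 4 * R < ε ^ 2 * L := by
    have h := (div_lt_iff₀ (by positivity : (0:ℝ) < ε ^ 2)).mp hL'
    linarith [h]
  -- abbreviations
  set u1 := Real.sqrt (L ^ 2 - 4 * R ^ 2) with hu1def
  set L2 := L * (1 + ε) with hL2def
  set u2 := Real.sqrt (L2 ^ 2 - 4 * R ^ 2) with hu2def
  have hLL2 : L ≤ L2 := by rw [hL2def]; linarith [mul_pos hL0 hε]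
  have hu1n : 0 ≤ u1 := Real.sqrt_nonneg _
  have hu2n : 0 ≤ u2 := Real.sqrt_nonneg _
  have hlogt1 : 0 ≤ Real.log ((L + u1) / (2 * R)) := by
    apply Real.log_nonneg
    rw [le_div_iff₀ (by linarith)]
    linarith
  have hlogt2 : 0 ≤ Real.log ((L2 + u2) / (2 * R)) := by
    apply Real.log_nonneg
    rw [le_div_iff₀ (by linarith)]
    linarith
  set c1 := 2 * Real.sqrt (Θ₀ * B * R ^ 2) * Real.log ((L + u1) / (2 * R)) with hc1def
  set c2 := 2 * Real.sqrt (Θ₀ * B * R ^ 2) * Real.log ((L2 + u2) / (2 * R)) with hc2def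
  have hc1n : 0 ≤ c1 := by
    apply mul_nonneg (by positivity) hlogt1
  have hc2n : 0 ≤ c2 := by
    apply mul_nonneg (by positivity) hlogt2
  clear_value u1 u2 c1 c2 L2
  have hS0pos : 0 < S0 B R L := lt_of_lt_of_le (by positivity) (S0_lower hB hR hL)
  have hgap3 : S0 B R L + 7 / 72 * B * ε * L ^ 2 ≤ S0 B R L2 := by
    have h := S0_gap hB hR hL hLL2
    have e : 7 / 72 * B * (L2 - L) * L = 7 / 72 * B * ε * L ^ 2 := by
      rw [hL2def]; ring
    linarith [e ▸ h]
  -- choice of η₀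
  refine ⟨min (R / 16) (L / 144), by positivity, ?_⟩
  intro η hη
  obtain ⟨hη0, hηlt⟩ := hη
  have hηR : η < R / 16 := lt_of_lt_of_le hηlt (min_le_left _ _)
  have hηL : η < L / 144 := lt_of_lt_of_le hηlt (min_le_right _ _)
  -- choice of κ
  set G := min (B * L ^ 2 / 36) (min (B * R * L / 8) (B * ε * L ^ 2 / 24)) with hGdef
  have hG0 : 0 < G := by
    apply lt_min (by positivity) (lt_min (by positivity) (by positivity))
  have hG1 : G ≤ B * L ^ 2 / 36 := min_le_left _ _
  have hG2 : G ≤ B * R * L / 8 := le_trans (min_le_right _ _) (min_le_left _ _)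
  have hG3 : G ≤ B * ε * L ^ 2 / 24 := le_trans (min_le_right _ _) (min_le_right _ _)
  set κ := min 1 (G / S0 B R L) with hκdef
  have hκ0 : 0 < κ := lt_min one_pos (div_pos hG0 hS0pos)
  have hκ1 : κ ≤ 1 := min_le_left _ _
  have hκG : κ * S0 B R L ≤ G := by
    have h := min_le_right 1 (G / S0 B R L)
    rw [← hκdef] at h
    calc κ * S0 B R L ≤ G / S0 B R L * S0 B R L :=
          mul_le_mul_of_nonneg_right h hS0pos.le
      _ = G := by field_simp
  clear_value G κ
  refine ⟨κ, hκ0, 4, by norm_num, ?_⟩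
  -- choice of h₀
  set m := min (S0 B R L) (B * ε * L ^ 2 / 24) with hmdef
  have hm0 : 0 < m := lt_min hS0pos (by positivity)
  have hmS : m ≤ S0 B R L := min_le_left _ _
  have hmε : m ≤ B * ε * L ^ 2 / 24 := min_le_right _ _
  clear_value m
  have hden : (0:ℝ) < c1 + c2 + 1 := by linarith
  refine ⟨(m / (c1 + c2 + 1)) ^ 2, pow_pos (div_pos hm0 hden) 2, ?_⟩
  intro h hh
  obtain ⟨hh0, hhlt⟩ := hh
  -- sqrt h bounds
  have hsqh : Real.sqrt h ≤ m / (c1 + c2 + 1) := by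
    calc Real.sqrt h ≤ Real.sqrt ((m / (c1 + c2 + 1)) ^ 2) := Real.sqrt_le_sqrt hhlt.le
      _ = m / (c1 + c2 + 1) := Real.sqrt_sq (by positivity)
  have hsqhn : 0 ≤ Real.sqrt h := Real.sqrt_nonneg h
  have hc1h : Real.sqrt h * c1 ≤ m := by
    have h1 : Real.sqrt h * c1 ≤ m / (c1 + c2 + 1) * c1 :=
      mul_le_mul_of_nonneg_right hsqh hc1n
    have h2 : m / (c1 + c2 + 1) * c1 ≤ m := by
      rw [div_mul_eq_mul_div, div_le_iff₀ hden]
      linarith [mul_nonneg hm0.le hc2n, mul_nonneg hm0.le hc1n]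
    linarith
  have hc2h : Real.sqrt h * c2 ≤ m := by
    have h1 : Real.sqrt h * c2 ≤ m / (c1 + c2 + 1) * c2 :=
      mul_le_mul_of_nonneg_right hsqh hc2n
    have h2 : m / (c1 + c2 + 1) * c2 ≤ m := by
      rw [div_mul_eq_mul_div, div_le_iff₀ hden]
      linarith [mul_nonneg hm0.le hc2n, mul_nonneg hm0.le hc1n]
    linarith
  -- expressing Sh via S0
  have hsqmul : Real.sqrt (h * Θ₀ * B * R ^ 2) = Real.sqrt h * Real.sqrt (Θ₀ * B * R ^ 2) := by
    rw [show h * Θ₀ * B * R ^ 2 = h * (Θ₀ * B * R ^ 2) by ring, Real.sqrt_mul hh0.le]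
  have hShL : Sh B R Θ₀ h L = S0 B R L - Real.sqrt h * c1 := by
    rw [Sh_eq_S0, hsqmul, ← hu1def, hc1def]; ring
  have hShL2 : Sh B R Θ₀ h L2 = S0 B R L2 - Real.sqrt h * c2 := by
    rw [Sh_eq_S0, hsqmul, ← hu2def, hc2def]; ring
  have hShL_le : Sh B R Θ₀ h L ≤ S0 B R L := by
    rw [hShL]; linarith [mul_nonneg hsqhn hc1n]
  have hShL_nn : 0 ≤ Sh B R Θ₀ h L := by
    rw [hShL]; linarith
  -- the master upper bound for (1+κ)·Sh
  have hRHS : (1 + κ) * Sh B R Θ₀ h L ≤ S0 B R L + G := by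
    have h1 : (1 + κ) * Sh B R Θ₀ h L ≤ (1 + κ) * S0 B R L :=
      mul_le_mul_of_nonneg_left hShL_le (by linarith)
    linarith [h1, hκG]
  -- bound 1
  have b1 : (1 + κ) * Sh B R Θ₀ h L ≤ 2 * Sh B R Θ₀ h L := by
    linarith [mul_nonneg (show (0:ℝ) ≤ 1 - κ by linarith) hShL_nn]
  -- d(L-R-4η) lower bound
  have ha0 : (0:ℝ) < L - R - 4 * η := by linarith
  have hdd := agmon_diff_le (B := B) hB.le hR ha0 (show L - R - 4 * η ≤ L - R by linarith)
  have hsq' : (L - R) ^ 2 - (L - R - 4 * η) ^ 2 ≤ 8 * η * L := by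
    linarith [mul_nonneg hη0.le hR.le, sq_nonneg η]
  have hdlow : agmonDist B R (L - R) - 2 * B * η * L ≤ agmonDist B R (L - R - 4 * η) := by
    have hm4 := mul_le_mul_of_nonneg_left hsq' (show (0:ℝ) ≤ B / 4 by positivity)
    have e : B / 4 * (8 * η * L) = 2 * B * η * L := by ring
    linarith [hdd, hm4, e]
  -- bound 2
  have b2 : (1 + κ) * Sh B R Θ₀ h L ≤ 2 * agmonDist B R (L - R - 4 * η) := by
    have h2d := two_d_ge hB hR hL
    have hηb : 4 * B * η * L ≤ B * L ^ 2 / 36 := by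
      have key := mul_nonneg (mul_nonneg hB.le hL0.le) (show (0:ℝ) ≤ L / 144 - η by linarith)
      linarith [key]
    linarith [hRHS, hdlow, hG1, h2d, hηb]
  -- bound 3
  have b3 : (1 + κ) * Sh B R Θ₀ h L ≤ Sh B R Θ₀ h L2 := by
    rw [hShL2]
    have h1 : Real.sqrt h * c2 ≤ B * ε * L ^ 2 / 24 := le_trans hc2h hmε
    linarith [hRHS, hgap3, hG3, h1]
  -- bound 4
  have b4 : (1 + κ) * Sh B R Θ₀ h L
      ≤ agmonDist B R (L - R - 4 * η) + agmonDist B R (ε * L + R + 2 * η) := by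
    have hsum := d_sum_ge hB hR hL hε hεL
    have hmono : agmonDist B R (ε * L + R) ≤ agmonDist B R (ε * L + R + 2 * η) :=
      agmon_mono hB.le hR (by linarith [mul_pos hε hL0]) (by linarith)
    have hηb : 2 * B * η * L ≤ B * R * L / 8 := by
      have key := mul_nonneg (mul_nonneg hB.le hL0.le) (show (0:ℝ) ≤ R / 16 - η by linarith)
      linarith [key]
    linarith [hRHS, hdlow, hG2, hsum, hmono, hηb]
  -- conclusion
  have hEexp : ∀ a : ℝ, (1 + κ) * Sh B R Θ₀ h L ≤ a →
      Real.exp (-a / h) ≤ Real.exp (-((1 + κ) * Sh B R Θ₀ h L) / h) := by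
    intro a hA
    apply Real.exp_le_exp.mpr
    apply (div_le_div_iff_of_pos_right hh0).mpr
    linarith
  have e1 := hEexp _ b1
  have e2 := hEexp _ b2
  have e3 := hEexp _ b3
  have e4 := hEexp _ b4
  linarith [e1, e2, e3, e4]
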